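/- Let Φ₁, …, Φ_l be alternating multilinear forms on V = ℝ^N (of degrees p₁, …, p_l), and let 𝔞 = {A ∈ End(V) : A·Φ_i = 0 for all i} be the space of endomorphisms annihilating every Φ_i under the derivation action. If 𝔞 is contained in 𝔰𝔬(N), then 𝔞 satisfies condition (C1): for every nonzero v ∈ V, the linear map A ↦ p_v ∘ A ∘ p_v is injective on 𝔞, where p_v is the orthogonal projection of V onto the orthogonal complement of v. -/

import Mathlib

open scoped RealInnerProductSpace

noncomputable section

abbrev V (N : ℕ) := EuclideanSpace ℝ (Fin N)

/-- An endomorphism is skew-symmetric (i.e. belongs to `𝔰𝔬(N)`). -/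
def skew {N : ℕ} (A : Module.End ℝ (V N)) : Prop :=
  ∀ x y : V N, ⟪A x, y⟫ = - ⟪x, A y⟫

/-- Orthogonal projection of `V N` onto the orthogonal complement of `v`. -/
def pv {N : ℕ} (v : V N) : Module.End ℝ (V N) :=
  (Submodule.span ℝ {v})ᗮ.subtype ∘ₗ
    (Submodule.span ℝ {v})ᗮ.orthogonalProjectionOnto.toLinearMap

/-- Condition (C1): for every nonzero `v`, the map `A ↦ p_v ∘ A ∘ p_v` is injective on `𝔤`. -/
def C1 {N : ℕ} (g : Set (Module.End ℝ (V N))) : Prop :=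
  ∀ v : V N, v ≠ 0 → Set.InjOn (fun A => pv v ∘ₗ A ∘ₗ pv v) g

/-- The derivation action of an endomorphism `A` on a `p`-linear alternating form `Φ`:
`(A·Φ)(x₁, …, x_p) = Σ_s Φ(x₁, …, A x_s, …, x_p)`. -/
def derivAct {N p : ℕ} (A : Module.End ℝ (V N))
    (Φ : AlternatingMap ℝ (V N) ℝ (Fin p)) : (Fin p → V N) → ℝ :=
  fun x => ∑ s : Fin p, Φ (Function.update x s (A (x s)))

namespace Stmt4Aux

open Function Finset

variable {N q : ℕ}

/-- Weighted substitution: `(opA w v f)(x) = Σ_s ⟪w, x_s⟫ f(x[s←v])`. -/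
def opA (w v : V N) (f : (Fin q → V N) → ℝ) : (Fin q → V N) → ℝ :=
  fun x => ∑ s : Fin q, ⟪w, x s⟫ * f (Function.update x s v)

lemma opA_apply (w v : V N) (f : (Fin q → V N) → ℝ) (x : Fin q → V N) :
    opA w v f x = ∑ s : Fin q, ⟪w, x s⟫ * f (Function.update x s v) := rfl

/-- A double sum of an antisymmetric function vanishes. -/
lemma antisymm_sum_zero (g : Fin q → Fin q → ℝ) (hg : ∀ u s, g u s + g s u = 0) :
    ∑ u : Fin q, ∑ s : Fin q, g u s = 0 := by
  have h1 : (∑ u : Fin q, ∑ s : Fin q, g u s) = ∑ u : Fin q, ∑ s : Fin q, g s u :=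
    Finset.sum_comm
  have h2 : (∑ u : Fin q, ∑ s : Fin q, (g u s + g s u))
      = (∑ u : Fin q, ∑ s : Fin q, g u s) + (∑ u : Fin q, ∑ s : Fin q, g s u) := by
    rw [← Finset.sum_add_distrib]
    exact Finset.sum_congr rfl fun u _ => Finset.sum_add_distrib
  have h3 : (∑ u : Fin q, ∑ s : Fin q, (g u s + g s u)) = 0 := by
    refine Finset.sum_eq_zero fun u _ => Finset.sum_eq_zero fun s _ => hg u s
  linarith

/-- An off-diagonal double sum of an offdiag-antisymmetric function vanishes. -/
lemma offdiag_antisymm_sum_zero (g : Fin q → Fin q → ℝ)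
    (hg : ∀ u s, u ≠ s → g u s + g s u = 0) :
    ∑ u : Fin q, ∑ s ∈ Finset.univ.erase u, g u s = 0 := by
  have key : ∀ u : Fin q, (∑ s : Fin q, (if u = s then 0 else g u s))
      = ∑ s ∈ Finset.univ.erase u, g u s := by
    intro u
    rw [← Finset.add_sum_erase _ (fun s => if u = s then (0:ℝ) else g u s)
      (Finset.mem_univ u), if_pos rfl, zero_add]
    exact Finset.sum_congr rfl fun s hs =>
      if_neg (fun h => (Finset.ne_of_mem_erase hs) h.symm)
  rw [← Finset.sum_congr rfl fun u _ => key u]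
  apply antisymm_sum_zero
  intro u s
  by_cases h : u = s
  · subst h; simp
  · rw [if_neg h, if_neg (Ne.symm h)]
    exact hg u s h

variable {v w : V N}

section keylemma

variable (hv : ⟪v, v⟫ = 1) (hw : ⟪w, w⟫ = 1) (hvw : ⟪v, w⟫ = 0) (hwv : ⟪w, v⟫ = 0)
variable (Φ : AlternatingMap ℝ (V N) ℝ (Fin q))

include hvw in
/-- `b ∘ b = 0` on alternating maps. -/
lemma bb_zero (y : Fin q → V N) : opA v w (opA v w ⇑Φ) y = 0 := by
  rw [opA_apply]
  refine Finset.sum_eq_zero fun t _ => ?_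
  have h0 : opA v w ⇑Φ (Function.update y t w) = 0 := by
    rw [opA_apply]
    refine Finset.sum_eq_zero fun s _ => ?_
    by_cases hst : s = t
    · subst hst
      rw [Function.update_self, hvw]; ring
    · have hz : Φ (Function.update (Function.update y t w) s w) = 0 := by
        refine Φ.map_eq_zero_of_eq _ (i := s) (j := t) ?_ hst
        rw [Function.update_self, Function.update_of_ne (Ne.symm hst),
          Function.update_self]
      rw [hz]; ring
  rw [h0]; ring

include hvw in
lemma ba_zero (hab : ∀ x, opA w v ⇑Φ x = opA v w ⇑Φ x) (y : Fin q → V N) :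
    opA v w (opA w v ⇑Φ) y = 0 := by
  rw [show opA w v ⇑Φ = opA v w ⇑Φ from funext hab]
  exact bb_zero hvw Φ y

include hv hw hvw hwv in
/-- Main algebraic lemma: if `aΦ = bΦ` then `aΦ = 0`. -/
lemma a_zero (hab : ∀ x, opA w v ⇑Φ x = opA v w ⇑Φ x) (x : Fin q → V N) :
    opA w v ⇑Φ x = 0 := by
  classical
  set f1 : (Fin q → V N) → ℝ := opA w v ⇑Φ with hf1
  have hba : ∀ y, opA v w f1 y = 0 := ba_zero hvw Φ hab
  -- M := a (b (a Φ)) x = 0 because b (a Φ) = 0 everywhere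
  have hM0 : opA w v (opA v w f1) x = 0 := by
    rw [opA_apply]
    exact Finset.sum_eq_zero fun u _ => by rw [hba]; ring
  -- Now expand M the other way
  have hexp : ∀ u : Fin q, opA v w f1 (Function.update x u v)
      = Φ (Function.update x u v) +
        ∑ s ∈ Finset.univ.erase u,
          ⟪w, x s⟫ * Φ (Function.update (Function.update x u w) s v) := by
    intro u
    rw [opA_apply]
    rw [Finset.sum_eq_single u]
    · -- t = u term
      rw [Function.update_self, hv, one_mul, Function.update_idem]
      rw [hf1, opA_apply]
      rw [← Finset.add_sum_erase _ _ (Finset.mem_univ u)]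
      rw [Function.update_self, hw, one_mul, Function.update_idem]
      congr 1
      refine Finset.sum_congr rfl fun s hs => ?_
      rw [Function.update_of_ne (Finset.ne_of_mem_erase hs)]
    · -- t ≠ u terms vanish
      intro t _ htu
      have hz : f1 (Function.update (Function.update x u v) t w) = 0 := by
        rw [hf1, opA_apply]
        refine Finset.sum_eq_zero fun s _ => ?_
        by_cases hsu : s = u
        · subst hsu
          rw [Function.update_of_ne (Ne.symm htu), Function.update_self, hwv]
          ring
        · have hzz : Φ (Function.update (Function.update (Function.update x u v) t w) s v)
              = 0 := by
            refine Φ.map_eq_zero_of_eq _ (i := s) (j := u) ?_ hsu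
            rw [Function.update_self, Function.update_of_ne (Ne.symm hsu),
              Function.update_of_ne (Ne.symm htu), Function.update_self]
          rw [hzz]; ring
      rw [hz]; ring
    · intro h; exact absurd (Finset.mem_univ u) h
  -- combine
  have hsum : opA w v (opA v w f1) x
      = opA w v ⇑Φ x +
        ∑ u : Fin q, ∑ s ∈ Finset.univ.erase u,
          ⟪w, x u⟫ * (⟪w, x s⟫ * Φ (Function.update (Function.update x u w) s v)) := by
    rw [opA_apply, opA_apply, ← Finset.sum_add_distrib]
    refine Finset.sum_congr rfl fun u _ => ?_
    rw [hexp u, mul_add, Finset.mul_sum]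
  have hR : ∑ u : Fin q, ∑ s ∈ Finset.univ.erase u,
      ⟪w, x u⟫ * (⟪w, x s⟫ * Φ (Function.update (Function.update x u w) s v)) = 0 := by
    apply offdiag_antisymm_sum_zero
    intro u s hus
    have hswap : Function.update (Function.update x s w) u v
        = (Function.update (Function.update x u w) s v) ∘ Equiv.swap u s := by
      funext k
      simp only [Function.comp_apply]
      by_cases hku : k = u
      · subst hku
        rw [Equiv.swap_apply_left, Function.update_self, Function.update_self]
      · by_cases hks : k = s
        · subst hks
          rw [Equiv.swap_apply_right, Function.update_of_ne hus,
            Function.update_self, Function.update_of_ne (Ne.symm hus),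
            Function.update_self]
        · rw [Equiv.swap_apply_of_ne_of_ne hku hks, Function.update_of_ne hku,
            Function.update_of_ne hks, Function.update_of_ne hks,
            Function.update_of_ne hku]
    have hneg : Φ (Function.update (Function.update x s w) u v)
        = - Φ (Function.update (Function.update x u w) s v) := by
      rw [hswap]
      exact Φ.map_swap _ hus
    rw [hneg]; ring
  rw [hsum, hR, add_zero] at hM0
  exact hM0

end keylemma

/-- The rank-one map `x ↦ ⟪w, x⟫ • v` as an endomorphism. -/
def Tmap (w v : V N) : Module.End ℝ (V N) :=
  ((innerSL ℝ w).toLinearMap).smulRight v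

@[simp] lemma Tmap_apply (w v x : V N) : Tmap w v x = ⟪w, x⟫ • v := rfl

lemma derivAct_Tmap (w v : V N) (Φ : AlternatingMap ℝ (V N) ℝ (Fin q))
    (x : Fin q → V N) : derivAct (Tmap w v) Φ x = opA w v ⇑Φ x := by
  unfold derivAct
  rw [opA_apply]
  refine Finset.sum_congr rfl fun s _ => ?_
  rw [Tmap_apply, Φ.map_update_smul, smul_eq_mul]

end Stmt4Aux

/-- If the annihilator `𝔞 = {A ∈ End(V) : A·Φᵢ = 0 for all i}` of a family of alternating
forms `Φ₁, …, Φ_l` is contained in `𝔰𝔬(N)`, then `𝔞` satisfies condition (C1). -/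
theorem statement4 (N : ℕ) (hN : 1 ≤ N) (l : ℕ) (p : Fin l → ℕ)
    (Φ : ∀ i : Fin l, AlternatingMap ℝ (V N) ℝ (Fin (p i)))
    (hso : ∀ A : Module.End ℝ (V N),
      (∀ (i : Fin l) (x : Fin (p i) → V N), derivAct A (Φ i) x = 0) → skew A) :
    C1 {A : Module.End ℝ (V N) |
      ∀ (i : Fin l) (x : Fin (p i) → V N), derivAct A (Φ i) x = 0} := by
  intro v hv0 A hA B hB hfeq
  simp only [Set.mem_setOf_eq] at hA hB
  set C : Module.End ℝ (V N) := A - B with hCdef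
  -- C annihilates all the forms
  have hC : ∀ (i : Fin l) (x : Fin (p i) → V N), derivAct C (Φ i) x = 0 := by
    intro i x
    unfold derivAct
    have : ∀ s : Fin (p i),
        (Φ i) (Function.update x s (C (x s)))
          = (Φ i) (Function.update x s (A (x s)))
            - (Φ i) (Function.update x s (B (x s))) := by
      intro s
      rw [hCdef, LinearMap.sub_apply, (Φ i).map_update_sub]
    rw [Finset.sum_congr rfl fun s _ => this s, Finset.sum_sub_distrib]
    have hAi := hA i x
    have hBi := hB i x
    unfold derivAct at hAi hBi
    rw [hAi, hBi, sub_zero]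
  have hskew : skew C := hso C hC
  -- pv ∘ C ∘ pv = 0
  have hCpv : ∀ x : V N, pv v (C (pv v x)) = 0 := by
    intro x
    have h := LinearMap.ext_iff.mp hfeq x
    simp only [LinearMap.comp_apply] at h
    rw [hCdef, LinearMap.sub_apply, map_sub, h, sub_self]
  -- basic facts about pv
  have hvnorm : ‖v‖ ≠ 0 := norm_ne_zero_iff.mpr hv0
  have hn : (‖v‖ : ℝ) ^ 2 ≠ 0 := pow_ne_zero 2 hvnorm
  have hpv : ∀ y : V N, pv v y = y - (⟪v, y⟫ / (‖v‖ ^ 2 : ℝ)) • v := by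
    intro y
    have h := Submodule.starProjection_add_starProjection_orthogonal
      (K := Submodule.span ℝ {v}) y
    have h2 : ((Submodule.span ℝ {v}).starProjection y : V N)
        = (⟪v, y⟫ / (‖v‖ ^ 2 : ℝ)) • v := Submodule.starProjection_singleton ℝ y
    have hpv_eq : pv v y
        = ((Submodule.span ℝ {v})ᗮ.starProjection y : V N) := rfl
    rw [hpv_eq, eq_sub_of_add_eq' h, h2]
  have hpv_inner : ∀ y : V N, ⟪v, pv v y⟫ = 0 := by
    intro y
    rw [hpv y, inner_sub_right, real_inner_smul_right,
      real_inner_self_eq_norm_sq]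
    field_simp
    ring
  have hpv_fix : ∀ y : V N, ⟪v, y⟫ = 0 → pv v y = y := by
    intro y hy
    rw [hpv y, hy, zero_div, zero_smul, sub_zero]
  -- structure of C
  set w0 : V N := C v with hw0def
  have hCvv : ⟪C v, v⟫ = 0 := by
    have h := hskew v v
    have h2 : ⟪v, C v⟫ = ⟪C v, v⟫ := real_inner_comm _ _
    linarith
  have hw0v : ⟪w0, v⟫ = 0 := hCvv
  have hvw0 : ⟪v, w0⟫ = 0 := by rw [real_inner_comm]; exact hw0v
  have hCform : ∀ x : V N,
      C x = (⟪v, x⟫ / (‖v‖ ^ 2 : ℝ)) • w0 - (⟪w0, x⟫ / (‖v‖ ^ 2 : ℝ)) • v := by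
    intro x
    set c : ℝ := ⟪v, x⟫ / (‖v‖ ^ 2 : ℝ) with hcdef
    set y : V N := pv v x with hydef
    have hxy : x = c • v + y := by
      rw [hydef, hpv x, ← hcdef]; abel
    have hy_inner : ⟪v, y⟫ = 0 := hpv_inner x
    -- C y lies in the span of v
    have hpvCy : pv v (C y) = 0 := hCpv x
    have hCy_span : C y = (⟪v, C y⟫ / (‖v‖ ^ 2 : ℝ)) • v := by
      have h2 := hpv (C y)
      rw [hpvCy] at h2
      exact (sub_eq_zero.mp h2.symm)
    have hvCy : ⟪v, C y⟫ = - ⟪w0, y⟫ := by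
      have h := hskew v y
      rw [hw0def]
      linarith
    have hw0x : ⟪w0, y⟫ = ⟪w0, x⟫ := by
      rw [hxy, inner_add_right, real_inner_smul_right, hw0v]
      ring
    calc C x = C (c • v + y) := by rw [← hxy]
      _ = c • C v + C y := by rw [map_add, map_smul]
      _ = c • w0 + (⟪v, C y⟫ / (‖v‖ ^ 2 : ℝ)) • v := by rw [← hCy_span, hw0def]
      _ = c • w0 - (⟪w0, x⟫ / (‖v‖ ^ 2 : ℝ)) • v := by
          rw [hvCy, hw0x, neg_div, neg_smul]; abel
  -- It suffices to show w0 = 0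
  suffices hw0 : w0 = 0 by
    have hC0 : C = 0 := by
      apply LinearMap.ext
      intro x
      rw [hCform x, hw0]
      simp
    have := sub_eq_zero.mp hC0
    exact this
  by_contra hw0ne
  -- normalize
  have hwnorm : ‖w0‖ ≠ 0 := norm_ne_zero_iff.mpr hw0ne
  set vh : V N := (‖v‖ : ℝ)⁻¹ • v with hvhdef
  set wh : V N := (‖w0‖ : ℝ)⁻¹ • w0 with hwhdef
  have hvv : ⟪vh, vh⟫ = 1 := by
    rw [hvhdef, real_inner_smul_left, real_inner_smul_right,
      real_inner_self_eq_norm_sq]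
    field_simp
  have hww : ⟪wh, wh⟫ = 1 := by
    rw [hwhdef, real_inner_smul_left, real_inner_smul_right,
      real_inner_self_eq_norm_sq]
    field_simp
  have hvwh : ⟪vh, wh⟫ = 0 := by
    rw [hvhdef, hwhdef, real_inner_smul_left, real_inner_smul_right, hvw0]
    ring
  have hwvh : ⟪wh, vh⟫ = 0 := by rw [real_inner_comm]; exact hvwh
  set lam : ℝ := ‖w0‖ / ‖v‖ with hlamdef
  have hlam : lam ≠ 0 := div_ne_zero hwnorm hvnorm
  have hCform' : ∀ x : V N, C x = lam • (⟪vh, x⟫ • wh - ⟪wh, x⟫ • vh) := by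
    intro x
    rw [hCform x, hvhdef, hwhdef, hlamdef]
    have h1 : ⟪(‖v‖ : ℝ)⁻¹ • v, x⟫ = (‖v‖ : ℝ)⁻¹ * ⟪v, x⟫ := real_inner_smul_left _ _ _
    have h2 : ⟪(‖w0‖ : ℝ)⁻¹ • w0, x⟫ = (‖w0‖ : ℝ)⁻¹ * ⟪w0, x⟫ :=
      real_inner_smul_left _ _ _
    rw [h1, h2]
    match_scalars
    · field_simp
    · field_simp
  -- derive the hab hypothesis for the key lemma
  have hab : ∀ (i : Fin l) (x : Fin (p i) → V N),
      Stmt4Aux.opA wh vh ⇑(Φ i) x = Stmt4Aux.opA vh wh ⇑(Φ i) x := by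
    intro i x
    have h0 := hC i x
    unfold derivAct at h0
    have hterm : ∀ s : Fin (p i),
        (Φ i) (Function.update x s (C (x s)))
          = lam * (⟪vh, x s⟫ * (Φ i) (Function.update x s wh)
              - ⟪wh, x s⟫ * (Φ i) (Function.update x s vh)) := by
      intro s
      rw [hCform' (x s), (Φ i).map_update_smul, (Φ i).map_update_sub,
        (Φ i).map_update_smul, (Φ i).map_update_smul]
      simp [smul_eq_mul]
    rw [Finset.sum_congr rfl fun s _ => hterm s] at h0
    rw [← Finset.mul_sum] at h0
    have hsum0 : ∑ s : Fin (p i), (⟪vh, x s⟫ * (Φ i) (Function.update x s wh)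
        - ⟪wh, x s⟫ * (Φ i) (Function.update x s vh)) = 0 :=
      (mul_eq_zero.mp h0).resolve_left hlam
    rw [Finset.sum_sub_distrib] at hsum0
    unfold Stmt4Aux.opA
    linarith
  -- apply the key lemma: opA wh vh Φᵢ = 0, i.e. Tmap wh vh annihilates everything
  have haz : ∀ (i : Fin l) (x : Fin (p i) → V N),
      derivAct (Stmt4Aux.Tmap wh vh) (Φ i) x = 0 := by
    intro i x
    rw [Stmt4Aux.derivAct_Tmap]
    exact Stmt4Aux.a_zero hvv hww hvwh hwvh (Φ i) (hab i) x
  have hTskew : skew (Stmt4Aux.Tmap wh vh) := hso _ haz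
  have habs := hTskew wh vh
  rw [Stmt4Aux.Tmap_apply, Stmt4Aux.Tmap_apply, hww, hwvh] at habs
  simp only [one_smul, zero_smul, inner_zero_right] at habs
  rw [hvv] at habs
  norm_num at habs
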